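/- Let ξ be a finite (nonnegative) measure on Ω = {μ ∈ ℝᵏ : μᵢ ≥ 0 for all i} and fix z ∈ ℝᵏ with z₁ ≤ z₂ ≤ ⋯ ≤ z_k. Suppose ξ is invariant under coordinate permutations. For 1 ≤ i ≤ k let Ω⁽ⁱ⁾ = {μ ∈ Ω : μᵢ = 0}, and define N_i = ∫_{Ω⁽ⁱ⁾} exp(zᵀμ) dξ(μ) (assumed finite). Then N_i ≥ N_{i+1} for i = 1,…,k−1. -/
import Mathlib


open MeasureTheory Real Finset

/-- Lemma 3.1 (numerator monotonicity): for a permutation-invariant finite measure `ξ`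
on `Ω = {μ : ∀ i, μ i ≥ 0}` and `z` with nondecreasing coordinates,
`N i = ∫_{Ω ∩ {μ i = 0}} exp(zᵀμ) dξ` satisfies `N i ≥ N (i+1)`. -/
theorem numerator_antitone (k : ℕ) (ξ : Measure (Fin k → ℝ)) [IsFiniteMeasure ξ]
    (hinv : ∀ σ : Equiv.Perm (Fin k),
      Measure.map (fun μ : Fin k → ℝ => μ ∘ σ) ξ = ξ)
    (hΩ : ξ {μ : Fin k → ℝ | ¬ ∀ l, 0 ≤ μ l} = 0)
    (z : Fin k → ℝ) (hz : Monotone z)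
    (N : Fin k → ℝ)
    (hN : ∀ i : Fin k, N i =
      ∫ μ in {μ : Fin k → ℝ | (∀ l, 0 ≤ μ l) ∧ μ i = 0},
        Real.exp (∑ l, z l * μ l) ∂ξ)
    (hint : ∀ i : Fin k,
      IntegrableOn (fun μ : Fin k → ℝ => Real.exp (∑ l, z l * μ l))
        {μ : Fin k → ℝ | (∀ l, 0 ≤ μ l) ∧ μ i = 0} ξ)
    (i : Fin k) (h : (i : ℕ) + 1 < k) :
    N ⟨(i : ℕ) + 1, h⟩ ≤ N i := by
  set j : Fin k := ⟨(i : ℕ) + 1, h⟩ with hj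
  have hij : i ≠ j := by
    simp [hj, Fin.ext_iff]
  have hilej : i ≤ j := by
    simp [hj, Fin.le_def]
  set σ : Equiv.Perm (Fin k) := Equiv.swap i j with hσ
  set S : Set (Fin k → ℝ) := {μ : Fin k → ℝ | (∀ l, 0 ≤ μ l) ∧ μ i = 0} with hS
  set T : Set (Fin k → ℝ) := {μ : Fin k → ℝ | (∀ l, 0 ≤ μ l) ∧ μ j = 0} with hT
  have hmeas : ∀ a : Fin k, MeasurableSet {μ : Fin k → ℝ | (∀ l, 0 ≤ μ l) ∧ μ a = 0} := by
    intro a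
    have : {μ : Fin k → ℝ | (∀ l, 0 ≤ μ l) ∧ μ a = 0}
        = (⋂ l, {μ : Fin k → ℝ | 0 ≤ μ l}) ∩ {μ | μ a = 0} := by
      ext μ; simp [Set.mem_iInter]
    rw [this]
    exact (MeasurableSet.iInter fun l =>
        measurableSet_le measurable_const (measurable_pi_apply l)).inter
      (measurableSet_eq_fun (measurable_pi_apply a) measurable_const)
  have hSm : MeasurableSet S := hmeas i
  have hTm : MeasurableSet T := hmeas j
  have hcontf : Continuous fun μ : Fin k → ℝ => Real.exp (∑ l, z l * μ l) := by
    fun_prop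
  have hgm : Measurable fun μ : Fin k → ℝ => μ ∘ σ :=
    measurable_pi_lambda _ fun l => measurable_pi_apply (σ l)
  -- change of variables
  have key : N j = ∫ μ in S, Real.exp (∑ l, z (σ l) * μ l) ∂ξ := by
    rw [hN j]
    have := hinv σ
    conv_lhs => rw [← this]
    rw [setIntegral_map hTm hcontf.stronglyMeasurable.aestronglyMeasurable
      hgm.aemeasurable]
    have hpre : (fun μ : Fin k → ℝ => μ ∘ σ) ⁻¹' T = S := by
      ext μ
      simp only [Set.mem_preimage, hT, hS, Set.mem_setOf_eq, Function.comp]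
      constructor
      · rintro ⟨hpos, hz0⟩
        refine ⟨fun l => ?_, ?_⟩
        · have := hpos (σ.symm l); simpa using this
        · simpa [hσ, Equiv.swap_apply_right] using hz0
      · rintro ⟨hpos, hz0⟩
        exact ⟨fun l => hpos _, by simpa [hσ, Equiv.swap_apply_right] using hz0⟩
    rw [hpre]
    congr 1
    ext μ
    congr 1
    have := Equiv.sum_comp σ (fun l => z (σ l) * μ l)
    calc ∑ l, z l * (μ ∘ σ) l = ∑ l, z (σ (σ l)) * μ (σ l) := by
          apply Finset.sum_congr rfl
          intro l _
          simp [hσ, Equiv.swap_apply_self, Function.comp]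
      _ = ∑ l, z (σ l) * μ l := this
  -- pointwise comparison on S
  have hsum : ∀ μ ∈ S, (∑ l, z (σ l) * μ l) ≤ ∑ l, z l * μ l := by
    rintro μ ⟨hpos, hzero⟩
    apply Finset.sum_le_sum
    intro l _
    by_cases hl : l = i
    · subst hl; simp [hzero]
    by_cases hl' : l = j
    · subst hl'
      rw [hσ, Equiv.swap_apply_right]
      exact mul_le_mul_of_nonneg_right (hz hilej) (hpos _)
    · rw [hσ, Equiv.swap_apply_of_ne_of_ne hl hl']
  -- integrability of the swapped integrand on S
  have hintg : IntegrableOn (fun μ : Fin k → ℝ => Real.exp (∑ l, z (σ l) * μ l)) S ξ := by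
    apply Integrable.mono (hint i)
    · apply Continuous.aestronglyMeasurable
      fun_prop
    · refine (ae_restrict_iff' hSm).mpr (Filter.Eventually.of_forall fun μ hμ => ?_)
      simp only [Real.norm_eq_abs, abs_of_pos (Real.exp_pos _)]
      exact Real.exp_le_exp.mpr (hsum μ hμ)
  rw [hN i, key]
  exact setIntegral_mono_on hintg (hint i) hSm fun μ hμ =>
    Real.exp_le_exp.mpr (hsum μ hμ)
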